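/- Closed form of the KL divergence between two Dirichlet distributions. Fix K ≥ 2 and α, γ : Fin K → ℝ with α_k > 0 and γ_k > 0 for all k, and set α₀ = ∑_k α_k. Then ∫_S (f_α(x)/B(α)) · log( (f_α(x)/B(α)) / (f_γ(x)/B(γ)) ) dx = log(B(γ)/B(α)) + ∑_{k ∈ Fin K} (α_k − γ_k)(ψ(α_k) − ψ(α₀)); that is, KL(Dir(α) ‖ Dir(γ)) = log(B(γ)/B(α)) + ∑_k (α_k − γ_k)(ψ(α_k) − ψ(α₀)). -/

import Mathlib

open MeasureTheory Real
open scoped ENNReal NNReal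

/-- The open simplex `S = {x ∈ ℝ^{K-1} | ∀ i, 0 < xᵢ ∧ ∑ i, xᵢ < 1}`. -/
def openSimplex (K : ℕ) : Set (Fin (K - 1) → ℝ) :=
  {x | (∀ i, 0 < x i) ∧ ∑ i, x i < 1}

/-- The `k`-th barycentric coordinate: `X_k(x) = x_k` for `k < K-1`, and
`X_{K-1}(x) = 1 - ∑ i, x_i`. -/
noncomputable def bary (K : ℕ) (k : Fin K) (x : Fin (K - 1) → ℝ) : ℝ :=
  if h : (k : ℕ) < K - 1 then x ⟨k, h⟩ else 1 - ∑ i, x i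

/-- The unnormalized Dirichlet density `f_α(x) = ∏ k, X_k(x)^(α k - 1)`
(real powers). -/
noncomputable def dirichletDensity {K : ℕ} (α : Fin K → ℝ) (x : Fin (K - 1) → ℝ) : ℝ :=
  ∏ k, (bary K k x) ^ (α k - 1)

/-- The multivariate Beta function `B(α) = (∏ k, Γ(α k)) / Γ(∑ k, α k)`. -/
noncomputable def multiBeta {K : ℕ} (α : Fin K → ℝ) : ℝ :=
  (∏ k, Real.Gamma (α k)) / Real.Gamma (∑ k, α k)

/-- The digamma function `ψ(t)`: the derivative at `t` of `log ∘ Γ`. -/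
noncomputable def digamma (t : ℝ) : ℝ :=
  deriv (fun s => Real.log (Real.Gamma s)) t

open Set intervalIntegral

-- measurability
lemma measurable_bary (K : ℕ) (k : Fin K) : Measurable (bary K k) := by
  unfold bary
  split
  · exact measurable_pi_apply _
  · exact measurable_const.sub (Finset.measurable_sum _ fun i _ => measurable_pi_apply i)

lemma measurable_dirichletDensity {K : ℕ} (α : Fin K → ℝ) :
    Measurable (dirichletDensity α) :=
  Finset.measurable_prod _ fun k _ => by
    have := measurable_bary K k; fun_prop

lemma measurableSet_openSimplex (K : ℕ) : MeasurableSet (openSimplex K) := by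
  have h1 : MeasurableSet {x : Fin (K-1) → ℝ | ∀ i, 0 < x i} := by
    have : {x : Fin (K-1) → ℝ | ∀ i, 0 < x i} = ⋂ i, {x | 0 < x i} := by ext x; simp
    rw [this]
    exact MeasurableSet.iInter fun i => measurableSet_lt measurable_const (measurable_pi_apply i)
  have h2 : MeasurableSet {x : Fin (K-1) → ℝ | ∑ i, x i < 1} :=
    measurableSet_lt (Finset.measurable_sum _ fun i _ => measurable_pi_apply i) measurable_const
  exact h1.inter h2

-- positivity of bary on simplex
lemma bary_pos {K : ℕ} (k : Fin K) {x : Fin (K-1) → ℝ} (hx : x ∈ openSimplex K) :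
    0 < bary K k x := by
  unfold bary; split
  · exact hx.1 _
  · linarith [hx.2]

lemma dirichletDensity_pos {K : ℕ} (α : Fin K → ℝ) {x : Fin (K-1) → ℝ}
    (hx : x ∈ openSimplex K) : 0 < dirichletDensity α x :=
  Finset.prod_pos fun k _ => rpow_pos_of_pos (bary_pos k hx) _

lemma multiBeta_pos {K : ℕ} {α : Fin K → ℝ} (hα : ∀ k, 0 < α k) (hK : 0 < K) :
    0 < multiBeta α := by
  apply div_pos (Finset.prod_pos fun k _ => Real.Gamma_pos_of_pos (hα k))
  exact Real.Gamma_pos_of_pos (Finset.sum_pos (fun k _ => hα k) (by simp [Finset.univ_nonempty_iff, Fin.pos_iff_nonempty.mp hK]))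

-- sum of bary = 1
lemma sum_bary {K : ℕ} (hK : 0 < K) (x : Fin (K-1) → ℝ) : ∑ k, bary K k x = 1 := by
  obtain ⟨n, rfl⟩ : ∃ n, K = n + 1 := ⟨K - 1, (Nat.succ_pred_eq_of_pos hK).symm⟩
  rw [Fin.sum_univ_castSucc]
  have h1 : ∀ k : Fin n, bary (n+1) k.castSucc x = x k := by
    intro k
    simp only [bary]
    rw [dif_pos (by simpa using k.isLt)]
    exact congrArg x (Fin.ext (by simp))
  have h2 : bary (n+1) (Fin.last n) x = 1 - ∑ i, x i := by
    simp only [bary]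
    rw [dif_neg (by simp)]
  simp only [h1, h2]
  have : ∑ i : Fin (n+1-1), x i = ∑ k : Fin n, x k := rfl
  linarith [this]

lemma complex_eq_real_integrand {a b x : ℝ} (h0 : 0 ≤ x) (h1 : x ≤ 1) :
    (x:ℂ) ^ ((a:ℂ) - 1) * (1 - (x:ℂ)) ^ ((b:ℂ) - 1) = ((x ^ (a-1) * (1-x) ^ (b-1) : ℝ) : ℂ) := by
  push_cast
  rw [Complex.ofReal_cpow h0, Complex.ofReal_cpow (by linarith)]
  push_cast
  ring

lemma real_beta_integral {a b : ℝ} (ha : 0 < a) (hb : 0 < b) :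
    ∫ t in (0:ℝ)..1, t^(a-1) * (1-t)^(b-1) = Real.Gamma a * Real.Gamma b / Real.Gamma (a+b) := by
  have key := Complex.Gamma_mul_Gamma_eq_betaIntegral (s := (a:ℂ)) (t := (b:ℂ)) (by simpa) (by simpa)
  have hbeta : Complex.betaIntegral a b = ((∫ t in (0:ℝ)..1, t^(a-1) * (1-t)^(b-1) : ℝ) : ℂ) := by
    rw [Complex.betaIntegral, ← intervalIntegral.integral_ofReal]
    apply intervalIntegral.integral_congr
    intro x hx
    rw [Set.uIcc_of_le (by norm_num : (0:ℝ) ≤ 1)] at hx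
    exact complex_eq_real_integrand hx.1 hx.2
  have hG : ((a:ℂ) + b) = ((a + b : ℝ) : ℂ) := by push_cast; ring
  rw [hbeta, hG, Complex.Gamma_ofReal, Complex.Gamma_ofReal, Complex.Gamma_ofReal,
    ← Complex.ofReal_mul, ← Complex.ofReal_mul] at key
  have key' := Complex.ofReal_inj.mp key
  have hpos : Real.Gamma (a+b) ≠ 0 := (Real.Gamma_pos_of_pos (by linarith)).ne'
  rw [eq_div_iff hpos]
  linarith [key']

lemma beta_integrableOn {a b : ℝ} (ha : 0 < a) (hb : 0 < b) :
    IntegrableOn (fun t : ℝ => t^(a-1) * (1-t)^(b-1)) (Ioo 0 1) := by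
  have hc := (Complex.betaIntegral_convergent (u := (a:ℂ)) (v := (b:ℂ)) (by simpa) (by simpa)).1
  have h2 : IntegrableOn (fun x : ℝ => ((x:ℂ) ^ ((a:ℂ) - 1) * (1 - (x:ℂ)) ^ ((b:ℂ) - 1)).re)
      (Ioo 0 1) := IntegrableOn.mono_set hc.re Ioo_subset_Ioc_self
  apply h2.congr_fun _ measurableSet_Ioo
  intro x hx
  simp only
  rw [complex_eq_real_integrand hx.1.le hx.2.le, Complex.ofReal_re]

lemma beta_lintegral {a b : ℝ} (ha : 0 < a) (hb : 0 < b) :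
    ∫⁻ t in Ioo (0:ℝ) 1, ENNReal.ofReal (t^(a-1) * (1-t)^(b-1)) =
      ENNReal.ofReal (Real.Gamma a * Real.Gamma b / Real.Gamma (a+b)) := by
  rw [← real_beta_integral ha hb, intervalIntegral.integral_of_le (by norm_num : (0:ℝ) ≤ 1),
    MeasureTheory.integral_Ioc_eq_integral_Ioo,
    ← MeasureTheory.ofReal_integral_eq_lintegral_ofReal (beta_integrableOn ha hb)]
  filter_upwards [self_mem_ae_restrict measurableSet_Ioo] with t ht
  exact mul_nonneg (Real.rpow_nonneg ht.1.le _) (Real.rpow_nonneg (by linarith [ht.2]) _)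

-- helpers for the induction step
lemma mem_openSimplex_cons {n : ℕ} {t : ℝ} {w : Fin n → ℝ} :
    Fin.cons t w ∈ openSimplex (n+2) ↔ (0 < t ∧ (∀ j, 0 < w j) ∧ t + ∑ j, w j < 1) := by
  set v : Fin (n+1) → ℝ := Fin.cons t w with hv
  have hmem : Fin.cons t w ∈ openSimplex (n+2) ↔
      ((∀ i : Fin (n+1), 0 < v i) ∧ ∑ i : Fin (n+1), v i < 1) := Iff.rfl
  rw [hmem]
  have hsum : ∑ i : Fin (n+1), v i = t + ∑ j : Fin n, w j := Fin.sum_cons t w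
  rw [hsum]
  simp only [hv]
  constructor
  · rintro ⟨h1, h2⟩
    exact ⟨h1 0, fun j => h1 j.succ, h2⟩
  · rintro ⟨h1, h2, h3⟩
    refine ⟨fun i => ?_, h3⟩
    refine Fin.cases ?_ ?_ i
    · exact h1
    · exact h2

lemma bary_cons_zero {n : ℕ} (t : ℝ) (w : Fin n → ℝ) :
    bary (n+2) 0 (Fin.cons t w) = t := by
  unfold bary
  rw [dif_pos (by simp : ((0 : Fin (n+2)) : ℕ) < n + 2 - 1)]
  rfl

lemma bary_cons_succ {n : ℕ} (t : ℝ) (z : Fin n → ℝ) (j : Fin (n+1)) :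
    bary (n+2) j.succ (Fin.cons t ((1-t) • z)) = (1-t) * bary (n+1) j z := by
  unfold bary
  by_cases h : (j : ℕ) < n
  · rw [dif_pos (by simpa using Nat.succ_lt_succ h), dif_pos (by simpa using h)]
    have : (⟨(j.succ : ℕ), by simpa using Nat.succ_lt_succ h⟩ : Fin (n+2-1)) =
        Fin.succ ⟨(j : ℕ), h⟩ := by
      apply Fin.ext; simp
    rw [this, Fin.cons_succ]
    simp
  · rw [dif_neg (by simpa using fun hh => h (Nat.lt_of_succ_lt_succ hh)),
      dif_neg (by simpa using h)]
    have hsum : ∑ i : Fin (n+1), Fin.cons t ((1-t) • z) i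
        = t + ∑ j : Fin n, (1-t) * z j := by
      rw [Fin.sum_cons]; rfl
    rw [show ∑ i : Fin (n+2-1), Fin.cons t ((1-t) • z) i
        = t + ∑ j : Fin n, (1-t) * z j from hsum, ← Finset.mul_sum]
    have : ∑ i : Fin (n+1-1), z i = ∑ i : Fin n, z i := rfl
    rw [this]
    ring

lemma lintegral_comp_smul_fin (n : ℕ) (h : (Fin n → ℝ) → ℝ≥0∞) (hm : Measurable h)
    {c : ℝ} (hc : 0 < c) :
    ∫⁻ y, h y = ENNReal.ofReal (c^n) * ∫⁻ z, h (c • z) := by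
  have hmap : ∫⁻ z, h (c • z) = ENNReal.ofReal |((c^n : ℝ))⁻¹| * ∫⁻ y, h y := by
    rw [← lintegral_map hm (measurable_const_smul c),
      Measure.map_addHaar_smul volume hc.ne', lintegral_smul_measure]
    congr 2
    rw [Module.finrank_fin_fun]
  rw [hmap, ← mul_assoc, ← ENNReal.ofReal_mul (by positivity)]
  rw [abs_of_nonneg (by positivity), mul_inv_cancel₀ (by positivity)]
  simp

lemma dirichletDensity_cons {n : ℕ} (α : Fin (n+2) → ℝ) {t : ℝ} (ht : 0 < t) (ht1 : t < 1)
    {z : Fin n → ℝ} (hz : z ∈ openSimplex (n+1)) :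
    dirichletDensity α (Fin.cons t ((1-t) • z)) =
      t ^ (α 0 - 1) * (1-t) ^ ((∑ j : Fin (n+1), α j.succ) - (n+1 : ℝ)) *
        dirichletDensity (α ∘ Fin.succ) z := by
  have hc : (0:ℝ) < 1 - t := by linarith
  unfold dirichletDensity
  rw [Fin.prod_univ_succ, bary_cons_zero]
  have key : ∏ j : Fin (n+1), bary (n+2) j.succ (Fin.cons t ((1-t) • z)) ^ (α j.succ - 1)
      = (1-t) ^ ((∑ j : Fin (n+1), α j.succ) - (n+1:ℝ)) *
        ∏ j : Fin (n+1), bary (n+1) j z ^ (α j.succ - 1) := by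
    have h1 : ∀ j : Fin (n+1), bary (n+2) j.succ (Fin.cons t ((1-t) • z)) ^ (α j.succ - 1)
        = (1-t) ^ (α j.succ - 1) * bary (n+1) j z ^ (α j.succ - 1) := fun j => by
      rw [bary_cons_succ, Real.mul_rpow hc.le (bary_pos j hz).le]
    rw [Finset.prod_congr rfl (fun j _ => h1 j), Finset.prod_mul_distrib,
      ← Real.rpow_sum_of_pos hc]
    congr 2
    rw [Finset.sum_sub_distrib, Finset.sum_const, Finset.card_univ, Fintype.card_fin]
    simp
  rw [key]
  have : ∀ j : Fin (n+1), (α ∘ Fin.succ) j = α j.succ := fun j => rfl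
  simp only [this]
  ring

lemma measurable_cons_fixed {n : ℕ} (t : ℝ) :
    Measurable (fun y : Fin n → ℝ => (Fin.cons t y : Fin (n+1) → ℝ)) := by
  apply measurable_pi_lambda
  intro i
  refine Fin.cases ?_ ?_ i
  · simpa using measurable_const
  · intro j
    simpa using measurable_pi_apply j

lemma measurable_cons_pair {n : ℕ} :
    Measurable (fun p : ℝ × (Fin n → ℝ) => (Fin.cons p.1 p.2 : Fin (n+1) → ℝ)) := by
  apply measurable_pi_lambda
  intro i
  refine Fin.cases ?_ ?_ i
  · simpa using measurable_fst
  · intro j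
    simp only [Fin.cons_succ]
    exact (measurable_pi_apply j).comp measurable_snd

lemma dirichlet_lintegral (n : ℕ) : ∀ (α : Fin (n+1) → ℝ), (∀ k, 0 < α k) →
    ∫⁻ x in openSimplex (n+1), ENNReal.ofReal (dirichletDensity α x) =
      ENNReal.ofReal (multiBeta α) := by
  induction n with
  | zero =>
    intro α hα
    have hS : openSimplex 1 = Set.univ := by
      ext x
      simp only [openSimplex, Set.mem_setOf_eq, Set.mem_univ, iff_true]
      exact ⟨fun i => i.elim0, by simp⟩
    have hd : ∀ x, dirichletDensity α x = 1 := by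
      intro x
      unfold dirichletDensity bary
      simp
    have hB : multiBeta α = 1 := by
      unfold multiBeta
      rw [Fin.prod_univ_one, Fin.sum_univ_one]
      exact div_self (Real.Gamma_pos_of_pos (hα 0)).ne'
    rw [hS, hB, Measure.restrict_univ]
    simp only [hd]
    rw [lintegral_const]
    rw [MeasureTheory.volume_pi, Measure.pi_univ]
    simp
  | succ n ih =>
    intro α hα
    have ha : 0 < α 0 := hα 0
    have hb : 0 < ∑ j : Fin (n+1), α j.succ :=
      Finset.sum_pos (fun j _ => hα j.succ) Finset.univ_nonempty
    set a : ℝ := α 0 with ha_def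
    set b : ℝ := ∑ j : Fin (n+1), α j.succ with hb_def
    set f : (Fin (n+1) → ℝ) → ℝ≥0∞ :=
      (openSimplex (n+2)).indicator (fun x => ENNReal.ofReal (dirichletDensity α x)) with hf
    have hfmeas : Measurable f :=
      ((measurable_dirichletDensity α).ennreal_ofReal).indicator (measurableSet_openSimplex _)
    have step1 : ∫⁻ x in openSimplex (n+2), ENNReal.ofReal (dirichletDensity α x)
        = ∫⁻ x, f x := (lintegral_indicator (measurableSet_openSimplex _) _).symm
    have hem := (volume_preserving_piFinSuccAbove (fun _ : Fin (n+1) => ℝ) 0).symm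
    have step2 : ∫⁻ x, f x = ∫⁻ p : ℝ × (Fin n → ℝ), f (Fin.cons p.1 p.2) := by
      rw [← hem.lintegral_comp_emb
        (MeasurableEquiv.piFinSuccAbove (fun _ : Fin (n+1) => ℝ) 0).symm.measurableEmbedding f]
      apply lintegral_congr
      intro p
      congr 1
      rw [MeasurableEquiv.piFinSuccAbove_symm_apply]
      simp [Fin.insertNthEquiv, Fin.insertNth_zero]
    have step3 : ∫⁻ p : ℝ × (Fin n → ℝ), f (Fin.cons p.1 p.2)
        = ∫⁻ t : ℝ, ∫⁻ y : Fin n → ℝ, f (Fin.cons t y) := by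
      exact lintegral_prod (fun p => f (Fin.cons p.1 p.2))
        (hfmeas.comp measurable_cons_pair).aemeasurable
    have inner : ∀ t : ℝ, (∫⁻ y : Fin n → ℝ, f (Fin.cons t y))
        = (Set.Ioo (0:ℝ) 1).indicator
            (fun t => ENNReal.ofReal (t^(a-1) * (1-t)^(b-1))
              * ENNReal.ofReal (multiBeta (α ∘ Fin.succ))) t := by
      intro t
      by_cases ht : t ∈ Set.Ioo (0:ℝ) 1
      · obtain ⟨ht0, ht1⟩ := ht
        have hc : (0:ℝ) < 1 - t := by linarith
        rw [Set.indicator_of_mem (Set.mem_Ioo.mpr ⟨ht0, ht1⟩)]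
        rw [lintegral_comp_smul_fin n (fun y => f (Fin.cons t y))
          (hfmeas.comp (measurable_cons_fixed t)) hc]
        have hpt : ∀ z : Fin n → ℝ, f (Fin.cons t ((1-t) • z))
            = (openSimplex (n+1)).indicator
                (fun z => ENNReal.ofReal ((t^(a-1) * (1-t)^(b-(n+1:ℝ)))
                  * dirichletDensity (α ∘ Fin.succ) z)) z := by
          intro z
          by_cases hz : z ∈ openSimplex (n+1)
          · rw [Set.indicator_of_mem hz, hf]
            have hpos : ∀ j : Fin n, 0 < ((1-t) • z) j := by
              intro j
              have h1 : (0:ℝ) < z j := hz.1 j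
              have : 0 < (1-t) * z j := mul_pos hc h1
              simpa using this
            have hsz : ∑ j : Fin n, ((1-t) • z) j = (1-t) * ∑ j : Fin n, z j := by
              simp [Finset.mul_sum]
            have hz1 : ∑ j : Fin n, z j < 1 := by
              have h2 := hz.2
              have hh : ∑ i : Fin (n+1-1), z i = ∑ i : Fin n, z i := rfl
              linarith [hh ▸ h2]
            have hmem : Fin.cons t ((1-t) • z) ∈ openSimplex (n+2) := by
              rw [mem_openSimplex_cons]
              refine ⟨ht0, hpos, ?_⟩
              rw [hsz]
              nlinarith
            rw [Set.indicator_of_mem hmem,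
              dirichletDensity_cons α ht0 ht1 hz]
          · rw [Set.indicator_of_notMem hz, hf, Set.indicator_of_notMem]
            intro hmem
            rw [mem_openSimplex_cons] at hmem
            obtain ⟨h1, h2, h3⟩ := hmem
            apply hz
            constructor
            · intro j
              have := h2 j
              simp only [Pi.smul_apply, smul_eq_mul] at this
              nlinarith
            · have hsz : ∑ j : Fin n, ((1-t) • z) j = (1-t) * ∑ j : Fin n, z j := by
                simp [Finset.mul_sum]
              rw [hsz] at h3
              have hh : ∑ i : Fin (n+1-1), z i = ∑ i : Fin n, z i := rfl
              rw [hh]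
              nlinarith
        simp only [hpt]
        have hone : (∫⁻ (z : Fin n → ℝ), (openSimplex (n+1)).indicator
              (fun z => ENNReal.ofReal (t ^ (a - 1) * (1 - t) ^ (b - (n+1:ℝ))
                * dirichletDensity (α ∘ Fin.succ) z)) z)
            = ENNReal.ofReal (t ^ (a-1) * (1-t)^(b-(n+1:ℝ)))
                * ENNReal.ofReal (multiBeta (α ∘ Fin.succ)) := by
          have e1 := lintegral_indicator (μ := volume) (measurableSet_openSimplex (n+1))
            (fun z => ENNReal.ofReal (t ^ (a - 1) * (1 - t) ^ (b - (n+1:ℝ))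
              * dirichletDensity (α ∘ Fin.succ) z))
          refine Eq.trans e1 ?_
          have hsplit : ∀ z : Fin (n+1-1) → ℝ,
              ENNReal.ofReal (t^(a-1) * (1-t)^(b-(n+1:ℝ)) * dirichletDensity (α ∘ Fin.succ) z)
              = ENNReal.ofReal (t^(a-1) * (1-t)^(b-(n+1:ℝ)))
                  * ENNReal.ofReal (dirichletDensity (α ∘ Fin.succ) z) :=
            fun z => ENNReal.ofReal_mul (by positivity)
          simp only [hsplit]
          rw [lintegral_const_mul' _ _ ENNReal.ofReal_ne_top,
            ih (α ∘ Fin.succ) (fun k => hα k.succ)]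
        rw [hone, ← mul_assoc, ← ENNReal.ofReal_mul (by positivity)]
        congr 2
        rw [← Real.rpow_natCast (1-t) n,
          show b - 1 = (n:ℝ) + (b - (n+1:ℝ)) by ring, Real.rpow_add hc]
        ring
      · rw [Set.indicator_of_notMem ht]
        have hzero : ∀ y : Fin n → ℝ, f (Fin.cons t y) = 0 := by
          intro y
          rw [hf]
          apply Set.indicator_of_notMem
          intro hmem
          rw [mem_openSimplex_cons] at hmem
          obtain ⟨h1, h2, h3⟩ := hmem
          apply ht
          constructor
          · exact h1
          · have : 0 ≤ ∑ j : Fin n, y j := Finset.sum_nonneg fun j _ => (h2 j).le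
            linarith
        simp only [hzero]
        simp
    have step4 : ∫⁻ t : ℝ, (∫⁻ y : Fin n → ℝ, f (Fin.cons t y))
        = ENNReal.ofReal (Real.Gamma a * Real.Gamma b / Real.Gamma (a+b))
            * ENNReal.ofReal (multiBeta (α ∘ Fin.succ)) := by
      simp only [inner]
      rw [lintegral_indicator measurableSet_Ioo,
        lintegral_mul_const' _ _ ENNReal.ofReal_ne_top, beta_lintegral ha hb]
    have halg : multiBeta α
        = Real.Gamma a * Real.Gamma b / Real.Gamma (a+b) * multiBeta (α ∘ Fin.succ) := by
      have hGb : Real.Gamma b ≠ 0 := (Real.Gamma_pos_of_pos hb).ne'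
      have hGab : Real.Gamma (a+b) ≠ 0 := (Real.Gamma_pos_of_pos (by linarith)).ne'
      unfold multiBeta
      rw [Fin.prod_univ_succ, Fin.sum_univ_succ]
      have hsum : ∑ j : Fin (n+1), (α ∘ Fin.succ) j = b := rfl
      have hprod : ∏ j : Fin (n+1), Real.Gamma ((α ∘ Fin.succ) j)
          = ∏ j : Fin (n+1), Real.Gamma (α j.succ) := rfl
      rw [hsum, hprod, ← ha_def, ← hb_def]
      field_simp
    rw [step1, step2, step3, step4, halg,
      ENNReal.ofReal_mul (by positivity)]

lemma dirichletDensity_nonneg {K : ℕ} (α : Fin K → ℝ) {x : Fin (K-1) → ℝ}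
    (hx : x ∈ openSimplex K) : 0 ≤ dirichletDensity α x :=
  (dirichletDensity_pos α hx).le

lemma dirichlet_integrableOn (n : ℕ) (α : Fin (n+1) → ℝ) (hα : ∀ k, 0 < α k) :
    IntegrableOn (dirichletDensity α) (openSimplex (n+1)) := by
  have hnn : 0 ≤ᶠ[ae (volume.restrict (openSimplex (n+1)))] dirichletDensity α := by
    rw [Filter.EventuallyLE, ae_restrict_iff' (measurableSet_openSimplex _)]
    exact Filter.Eventually.of_forall fun x hx => dirichletDensity_nonneg α hx
  refine ⟨(measurable_dirichletDensity α).aestronglyMeasurable, ?_⟩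
  rw [hasFiniteIntegral_iff_ofReal hnn]
  rw [dirichlet_lintegral n α hα]
  exact ENNReal.ofReal_lt_top

lemma dirichlet_integral (n : ℕ) (α : Fin (n+1) → ℝ) (hα : ∀ k, 0 < α k) :
    ∫ x in openSimplex (n+1), dirichletDensity α x = multiBeta α := by
  have hnn : 0 ≤ᶠ[ae (volume.restrict (openSimplex (n+1)))] dirichletDensity α := by
    rw [Filter.EventuallyLE, ae_restrict_iff' (measurableSet_openSimplex _)]
    exact Filter.Eventually.of_forall fun x hx => dirichletDensity_nonneg α hx
  rw [integral_eq_lintegral_of_nonneg_ae hnn (measurable_dirichletDensity α).aestronglyMeasurable,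
    dirichlet_lintegral n α hα, ENNReal.toReal_ofReal]
  exact (multiBeta_pos hα (Nat.succ_pos n)).le

lemma bary_le_one {K : ℕ} (k : Fin K) {x : Fin (K-1) → ℝ}
    (hx : x ∈ openSimplex K) : bary K k x ≤ 1 := by
  unfold bary
  split
  · have h1 : x ⟨(k:ℕ), by omega⟩ ≤ ∑ i, x i :=
      Finset.single_le_sum (fun i _ => (hx.1 i).le) (Finset.mem_univ _)
    linarith [hx.2]
  · have : (0:ℝ) ≤ ∑ i, x i := Finset.sum_nonneg fun i _ => (hx.1 i).le
    linarith

lemma abs_log_le {X ε : ℝ} (hX : 0 < X) (hX1 : X ≤ 1) (hε : 0 < ε) :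
    |Real.log X| ≤ X ^ (-ε) / ε := by
  have hlog : Real.log X ≤ 0 := Real.log_nonpos hX.le hX1
  rw [abs_of_nonpos hlog]
  have hinv : (1:ℝ) ≤ X⁻¹ := (one_le_inv₀ hX).mpr hX1
  have h1 : Real.log (X⁻¹ ^ ε) ≤ X⁻¹ ^ ε - 1 :=
    Real.log_le_sub_one_of_pos (Real.rpow_pos_of_pos (by positivity) ε)
  rw [Real.log_rpow (by positivity)] at h1
  have h2 : Real.log X⁻¹ = - Real.log X := Real.log_inv X
  rw [h2] at h1
  have h3 : X ^ (-ε) = X⁻¹ ^ ε := by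
    rw [Real.rpow_neg hX.le, Real.inv_rpow hX.le]
  rw [h3, le_div_iff₀ hε]
  have h4 : X⁻¹ ^ ε - 1 ≤ X⁻¹ ^ ε := by linarith
  nlinarith [h1, h4]

lemma dirichletDensity_update {K : ℕ} (α : Fin K → ℝ) (k : Fin K) (c : ℝ)
    {x : Fin (K-1) → ℝ} (hx : x ∈ openSimplex K) :
    dirichletDensity (Function.update α k c) x
      = dirichletDensity α x * (bary K k x) ^ (c - α k) := by
  unfold dirichletDensity
  rw [← Finset.mul_prod_erase Finset.univ _ (Finset.mem_univ k),
    ← Finset.mul_prod_erase Finset.univ (fun j => bary K j x ^ (α j - 1)) (Finset.mem_univ k)]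
  have h1 : ∏ j ∈ Finset.univ.erase k, bary K j x ^ (Function.update α k c j - 1)
      = ∏ j ∈ Finset.univ.erase k, bary K j x ^ (α j - 1) := by
    apply Finset.prod_congr rfl
    intro j hj
    rw [Function.update_of_ne (Finset.ne_of_mem_erase hj)]
  rw [h1, Function.update_self]
  have h2 : bary K k x ^ (c - 1) = bary K k x ^ (α k - 1) * bary K k x ^ (c - α k) := by
    rw [← Real.rpow_add (bary_pos k hx)]
    ring_nf
  rw [h2]
  ring

lemma sum_update (n : ℕ) (α : Fin (n+1) → ℝ) (k : Fin (n+1)) (c : ℝ) :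
    ∑ j, Function.update α k c j = (∑ j, α j) + (c - α k) := by
  rw [Finset.sum_update_of_mem (Finset.mem_univ k)]
  rw [← Finset.sum_erase_add Finset.univ α (Finset.mem_univ k)]
  have : Finset.univ \ {k} = Finset.univ.erase k := by
    ext j; simp [Finset.mem_erase, and_comm]
  rw [this]
  ring

lemma hasDerivAt_Gamma_digamma {t : ℝ} (ht : 0 < t) :
    HasDerivAt Real.Gamma (Real.Gamma t * digamma t) t := by
  have hne : ∀ m : ℕ, t ≠ -(m:ℝ) := fun m h => by
    have h0 : (0:ℝ) ≤ (m:ℝ) := Nat.cast_nonneg m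
    rw [h] at ht; linarith
  have hG := (Real.differentiableAt_Gamma hne).hasDerivAt
  have hpos := Real.Gamma_pos_of_pos ht
  have hlog : HasDerivAt (fun s => Real.log (Real.Gamma s))
      (deriv Real.Gamma t / Real.Gamma t) t := hG.log hpos.ne'
  have hdig : digamma t = deriv Real.Gamma t / Real.Gamma t := hlog.deriv
  rw [hdig]
  have heq : Real.Gamma t * (deriv Real.Gamma t / Real.Gamma t) = deriv Real.Gamma t := by
    field_simp
  rw [heq]
  exact hG

lemma multiBeta_eq_erase (n : ℕ) (α : Fin (n+1) → ℝ) (k : Fin (n+1)) :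
    multiBeta α = Real.Gamma (α k) * (∏ j ∈ Finset.univ.erase k, Real.Gamma (α j))
      / Real.Gamma (∑ j, α j) := by
  unfold multiBeta
  rw [← Finset.mul_prod_erase Finset.univ (fun j => Real.Gamma (α j)) (Finset.mem_univ k)]

lemma hasDerivAt_multiBeta_update (n : ℕ) (α : Fin (n+1) → ℝ) (hα : ∀ k, 0 < α k)
    (k : Fin (n+1)) :
    HasDerivAt (fun s => multiBeta (Function.update α k (α k + s)))
      (multiBeta α * (digamma (α k) - digamma (∑ j, α j))) 0 := by
  set A := ∑ j, α j with hA_def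
  have hA : 0 < A := Finset.sum_pos (fun j _ => hα j) Finset.univ_nonempty
  set P := ∏ j ∈ Finset.univ.erase k, Real.Gamma (α j) with hP_def
  have hP : 0 < P := Finset.prod_pos fun j _ => Real.Gamma_pos_of_pos (hα j)
  have hform : ∀ s : ℝ, multiBeta (Function.update α k (α k + s))
      = Real.Gamma (α k + s) * P / Real.Gamma (A + s) := by
    intro s
    unfold multiBeta
    have h1 : ∏ j, Real.Gamma (Function.update α k (α k + s) j)
        = Real.Gamma (α k + s) * P := by
      rw [← Finset.mul_prod_erase Finset.univ
        (fun j => Real.Gamma (Function.update α k (α k + s) j)) (Finset.mem_univ k),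
        Function.update_self]
      congr 1
      exact Finset.prod_congr rfl fun j hj => by
        rw [Function.update_of_ne (Finset.ne_of_mem_erase hj)]
    have h2 : ∑ j, Function.update α k (α k + s) j = A + s := by
      rw [sum_update]; rw [hA_def]; ring
    rw [h1, h2]
  have hcompk : HasDerivAt (fun s : ℝ => Real.Gamma (α k + s))
      (Real.Gamma (α k) * digamma (α k)) 0 := by
    have h0 := hasDerivAt_Gamma_digamma (hα k)
    have hlin : HasDerivAt (fun s : ℝ => α k + s) 1 0 := (hasDerivAt_id 0).const_add (α k)
    have := HasDerivAt.comp (0:ℝ) (by simpa using h0) hlin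
    rw [mul_one] at this; exact this
  have hnum : HasDerivAt (fun s : ℝ => Real.Gamma (α k + s) * P)
      (Real.Gamma (α k) * digamma (α k) * P) 0 := hcompk.mul_const P
  have hden : HasDerivAt (fun s : ℝ => Real.Gamma (A + s))
      (Real.Gamma A * digamma A) 0 := by
    have h0 := hasDerivAt_Gamma_digamma hA
    have hlin : HasDerivAt (fun s : ℝ => A + s) 1 0 := (hasDerivAt_id 0).const_add A
    have := HasDerivAt.comp (0:ℝ) (by simpa using h0) hlin
    rw [mul_one] at this; exact this
  have hGA : Real.Gamma (A + 0) ≠ 0 := by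
    rw [add_zero]; exact (Real.Gamma_pos_of_pos hA).ne'
  have hdiv := hnum.div hden hGA
  have heq : (fun s => multiBeta (Function.update α k (α k + s)))
      = fun s => Real.Gamma (α k + s) * P / Real.Gamma (A + s) := funext hform
  rw [heq]
  refine hdiv.congr_deriv ?_
  rw [multiBeta_eq_erase n α k, ← hP_def, ← hA_def]
  rw [add_zero]
  have hGA' : Real.Gamma A ≠ 0 := (Real.Gamma_pos_of_pos hA).ne'
  field_simp
  ring

lemma dirichlet_log_moment (n : ℕ) (α : Fin (n+1) → ℝ) (hα : ∀ k, 0 < α k) (k : Fin (n+1)) :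
    IntegrableOn (fun x => dirichletDensity α x * Real.log (bary (n+1) k x)) (openSimplex (n+1))
    ∧ ∫ x in openSimplex (n+1), dirichletDensity α x * Real.log (bary (n+1) k x)
        = multiBeta α * (digamma (α k) - digamma (∑ j, α j)) := by
  set μ := volume.restrict (openSimplex (n+1)) with hμ
  set ε := α k / 4 with hε_def
  have hε : 0 < ε := by have := hα k; positivity
  set F : ℝ → (Fin (n+1-1) → ℝ) → ℝ :=
    fun s x => dirichletDensity α x * bary (n+1) k x ^ s with hF
  set F' : ℝ → (Fin (n+1-1) → ℝ) → ℝ :=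
    fun s x => dirichletDensity α x * (bary (n+1) k x ^ s * Real.log (bary (n+1) k x)) with hF'
  set bound : (Fin (n+1-1) → ℝ) → ℝ :=
    fun x => ε⁻¹ * dirichletDensity (Function.update α k (α k - 2*ε)) x with hbound
  have hm1 := measurable_dirichletDensity α
  have hm2 := measurable_bary (n+1) k
  have hmlog := Real.measurable_log
  have hmF : ∀ s, Measurable (F s) := fun s => by rw [hF]; fun_prop
  have hmF' : Measurable (F' 0) := by rw [hF']; fun_prop
  have hF0 : F 0 = dirichletDensity α := by
    funext x; rw [hF]; simp [Real.rpow_zero]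
  have hF'0 : F' 0 = fun x => dirichletDensity α x * Real.log (bary (n+1) k x) := by
    funext x; rw [hF']; simp [Real.rpow_zero]
  have hupd_pos : ∀ j, 0 < Function.update α k (α k - 2*ε) j := by
    intro j
    rcases eq_or_ne j k with rfl | hne
    · rw [Function.update_self, hε_def]; have := hα j; linarith
    · rw [Function.update_of_ne hne]; exact hα j
  have hF_int : Integrable (F 0) μ := by
    rw [hF0]; exact dirichlet_integrableOn n α hα
  have h_bound : ∀ᵐ x ∂μ, ∀ s ∈ Metric.ball (0:ℝ) ε, ‖F' s x‖ ≤ bound x := by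
    rw [hμ, ae_restrict_iff' (measurableSet_openSimplex _)]
    apply Filter.Eventually.of_forall
    intro x hx s hs
    have hX : 0 < bary (n+1) k x := bary_pos k hx
    have hX1 : bary (n+1) k x ≤ 1 := bary_le_one k hx
    have hd : 0 ≤ dirichletDensity α x := dirichletDensity_nonneg α hx
    have hs' : |s| < ε := by simpa [Real.dist_eq] using hs
    have h1 : bary (n+1) k x ^ s ≤ bary (n+1) k x ^ (-ε) :=
      Real.rpow_le_rpow_of_exponent_ge hX hX1 (by cases abs_lt.mp hs'; linarith)
    have h2 : |Real.log (bary (n+1) k x)| ≤ bary (n+1) k x ^ (-ε) / ε :=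
      abs_log_le hX hX1 hε
    have h3 : bary (n+1) k x ^ s * |Real.log (bary (n+1) k x)|
        ≤ bary (n+1) k x ^ (-ε) * (bary (n+1) k x ^ (-ε) / ε) :=
      mul_le_mul h1 h2 (abs_nonneg _) (Real.rpow_nonneg hX.le _)
    have h4 : bary (n+1) k x ^ (-ε) * (bary (n+1) k x ^ (-ε) / ε)
        = ε⁻¹ * bary (n+1) k x ^ (-(2*ε)) := by
      rw [show -(2*ε) = -ε + -ε by ring, Real.rpow_add hX]
      field_simp
    have hnorm : ‖F' s x‖ = dirichletDensity α x
        * (bary (n+1) k x ^ s * |Real.log (bary (n+1) k x)|) := by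
      rw [hF', Real.norm_eq_abs, abs_mul, abs_of_nonneg hd, abs_mul,
        abs_of_nonneg (Real.rpow_nonneg hX.le _)]
    have hb_eq : bound x = ε⁻¹ * (dirichletDensity α x * bary (n+1) k x ^ (-(2*ε))) := by
      show ε⁻¹ * dirichletDensity (Function.update α k (α k - 2*ε)) x = _
      rw [dirichletDensity_update α k _ hx,
        show α k - 2*ε - α k = -(2*ε) by ring]
    rw [hnorm, hb_eq]
    calc dirichletDensity α x * (bary (n+1) k x ^ s * |Real.log (bary (n+1) k x)|)
        ≤ dirichletDensity α x * (ε⁻¹ * bary (n+1) k x ^ (-(2*ε))) := by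
          apply mul_le_mul_of_nonneg_left _ hd
          rw [← h4]; exact h3
      _ = ε⁻¹ * (dirichletDensity α x * bary (n+1) k x ^ (-(2*ε))) := by ring
  have hbound_int : Integrable bound μ := by
    rw [hbound]
    exact (dirichlet_integrableOn n _ hupd_pos).const_mul _
  have h_diff : ∀ᵐ x ∂μ, ∀ s ∈ Metric.ball (0:ℝ) ε, HasDerivAt (F · x) (F' s x) s := by
    rw [hμ, ae_restrict_iff' (measurableSet_openSimplex _)]
    apply Filter.Eventually.of_forall
    intro x hx s _
    have hX : 0 < bary (n+1) k x := bary_pos k hx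
    have h0 := (Real.hasStrictDerivAt_const_rpow hX s).hasDerivAt
    exact h0.const_mul (dirichletDensity α x)
  have main := hasDerivAt_integral_of_dominated_loc_of_deriv_le (Metric.ball_mem_nhds (0:ℝ) hε)
    (Filter.Eventually.of_forall fun s => (hmF s).aestronglyMeasurable) hF_int
    hmF'.aestronglyMeasurable h_bound hbound_int h_diff
  have hev : (fun s => ∫ x, F s x ∂μ)
      =ᶠ[nhds (0:ℝ)] (fun s => multiBeta (Function.update α k (α k + s))) := by
    filter_upwards [Metric.ball_mem_nhds (0:ℝ) hε] with s hs
    have hs' : |s| < ε := by simpa [Real.dist_eq] using hs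
    have hαs : ∀ j, 0 < Function.update α k (α k + s) j := by
      intro j
      rcases eq_or_ne j k with rfl | hne
      · rw [Function.update_self]
        cases abs_lt.mp hs'
        have := hα j
        rw [hε_def] at *
        linarith
      · rw [Function.update_of_ne hne]; exact hα j
    have heq : Set.EqOn (F s) (dirichletDensity (Function.update α k (α k + s)))
        (openSimplex (n+1)) := by
      intro x hx
      rw [hF, dirichletDensity_update α k _ hx, show α k + s - α k = s by ring]
    rw [hμ]
    rw [setIntegral_congr_fun (measurableSet_openSimplex _) heq]
    exact dirichlet_integral n _ hαs
  have hder2 : HasDerivAt (fun s => multiBeta (Function.update α k (α k + s)))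
      (∫ x, F' 0 x ∂μ) 0 := by
    have := main.2
    exact (Filter.EventuallyEq.hasDerivAt_iff hev.symm).mpr this
  have huniq : ∫ x, F' 0 x ∂μ = multiBeta α * (digamma (α k) - digamma (∑ j, α j)) :=
    hder2.unique (hasDerivAt_multiBeta_update n α hα k)
  constructor
  · have h := main.1
    rw [hF'0] at h
    exact h
  · rw [← hF'0]
    exact huniq


/-- **Closed form of the KL divergence between two Dirichlet distributions.**
For `K ≥ 2` and `α, γ` with positive entries, with `α₀ = ∑ k, α k`,
`KL(Dir(α)‖Dir(γ)) = log(B(γ)/B(α)) + ∑ k, (α_k − γ_k)(ψ(α_k) − ψ(α₀))`. -/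
theorem klDiv_dirichlet
    (K : ℕ) (hK : 2 ≤ K) (α γ : Fin K → ℝ)
    (hα : ∀ k, 0 < α k) (hγ : ∀ k, 0 < γ k) :
    ∫ x in openSimplex K,
        (dirichletDensity α x / multiBeta α) *
          Real.log ((dirichletDensity α x / multiBeta α) /
            (dirichletDensity γ x / multiBeta γ)) =
      Real.log (multiBeta γ / multiBeta α) +
        ∑ k, (α k - γ k) * (digamma (α k) - digamma (∑ j, α j)) := by

  obtain ⟨m, rfl⟩ : ∃ m, K = m + 1 := ⟨K - 1, by omega⟩
  have hBα : 0 < multiBeta α := multiBeta_pos hα (Nat.succ_pos m)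
  have hBγ : 0 < multiBeta γ := multiBeta_pos hγ (Nat.succ_pos m)
  have hpt : Set.EqOn
      (fun x => (dirichletDensity α x / multiBeta α) *
          Real.log ((dirichletDensity α x / multiBeta α) /
            (dirichletDensity γ x / multiBeta γ)))
      (fun x => (multiBeta α)⁻¹ *
          (Real.log (multiBeta γ / multiBeta α) * dirichletDensity α x
            + ∑ k, (α k - γ k) * (dirichletDensity α x * Real.log (bary (m+1) k x))))
      (openSimplex (m+1)) := by
    intro x hx
    have hfα : 0 < dirichletDensity α x := dirichletDensity_pos α hx
    have hfγ : 0 < dirichletDensity γ x := dirichletDensity_pos γ hx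
    have hlα : Real.log (dirichletDensity α x)
        = ∑ k, (α k - 1) * Real.log (bary (m+1) k x) := by
      unfold dirichletDensity
      rw [Real.log_prod (fun k _ => (Real.rpow_pos_of_pos (bary_pos k hx) _).ne')]
      exact Finset.sum_congr rfl fun k _ => Real.log_rpow (bary_pos k hx) _
    have hlγ : Real.log (dirichletDensity γ x)
        = ∑ k, (γ k - 1) * Real.log (bary (m+1) k x) := by
      unfold dirichletDensity
      rw [Real.log_prod (fun k _ => (Real.rpow_pos_of_pos (bary_pos k hx) _).ne')]
      exact Finset.sum_congr rfl fun k _ => Real.log_rpow (bary_pos k hx) _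
    have hlog : Real.log ((dirichletDensity α x / multiBeta α) /
          (dirichletDensity γ x / multiBeta γ))
        = Real.log (multiBeta γ / multiBeta α)
          + ∑ k, (α k - γ k) * Real.log (bary (m+1) k x) := by
      rw [Real.log_div (by positivity) (by positivity),
        Real.log_div hfα.ne' hBα.ne', Real.log_div hfγ.ne' hBγ.ne',
        Real.log_div hBγ.ne' hBα.ne', hlα, hlγ]
      have hsub : ∑ k, (α k - 1) * Real.log (bary (m+1) k x)
          - ∑ k, (γ k - 1) * Real.log (bary (m+1) k x)
          = ∑ k, (α k - γ k) * Real.log (bary (m+1) k x) := by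
        rw [← Finset.sum_sub_distrib]
        exact Finset.sum_congr rfl fun k _ => by ring
      linarith [hsub]
    simp only
    rw [hlog]
    have hsum : ∑ k, (α k - γ k) * (dirichletDensity α x * Real.log (bary (m+1) k x))
        = dirichletDensity α x * ∑ k, (α k - γ k) * Real.log (bary (m+1) k x) := by
      rw [Finset.mul_sum]
      exact Finset.sum_congr rfl fun k _ => by ring
    rw [hsum]
    field_simp
  rw [setIntegral_congr_fun (measurableSet_openSimplex _) hpt]
  have hint1 : IntegrableOn
      (fun x => Real.log (multiBeta γ / multiBeta α) * dirichletDensity α x)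
      (openSimplex (m+1)) :=
    (dirichlet_integrableOn m α hα).const_mul _
  have hint2 : ∀ k : Fin (m+1), IntegrableOn
      (fun x => (α k - γ k) * (dirichletDensity α x * Real.log (bary (m+1) k x)))
      (openSimplex (m+1)) :=
    fun k => ((dirichlet_log_moment m α hα k).1).const_mul _
  have hint3 : IntegrableOn
      (fun x => ∑ k, (α k - γ k) * (dirichletDensity α x * Real.log (bary (m+1) k x)))
      (openSimplex (m+1)) := integrable_finset_sum _ fun k _ => hint2 k
  rw [MeasureTheory.integral_const_mul, MeasureTheory.integral_add hint1 hint3,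
    MeasureTheory.integral_const_mul, dirichlet_integral m α hα,
    MeasureTheory.integral_finset_sum _ fun k _ => hint2 k]
  have hval : ∀ k : Fin (m+1),
      ∫ x in openSimplex (m+1),
        (α k - γ k) * (dirichletDensity α x * Real.log (bary (m+1) k x))
      = (α k - γ k) * (multiBeta α * (digamma (α k) - digamma (∑ j, α j))) := by
    intro k
    rw [MeasureTheory.integral_const_mul, (dirichlet_log_moment m α hα k).2]
  simp only [hval]
  have hsum2 : ∑ k : Fin (m+1), (α k - γ k) * (multiBeta α * (digamma (α k) - digamma (∑ j, α j)))
      = multiBeta α * ∑ k : Fin (m+1), (α k - γ k) * (digamma (α k) - digamma (∑ j, α j)) := by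
    rw [Finset.mul_sum]
    exact Finset.sum_congr rfl fun k _ => by ring
  rw [hsum2]
  field_simp
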